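/- Let A ∈ ℝ^{m×n} have rank ρ, fix k with 0 ≤ k ≤ ρ, let Ω ∈ ℝ^{n×r} with r ≥ k, and set Y = A Ω. If V_kᵀ Ω has full row rank, then for ξ ∈ {2, F}: ‖A_k − Y Y⁺ A‖_ξ² ≤ ‖A − A_k‖_ξ² + ‖Σ_{ρ−k} V_{ρ−k}ᵀ Ω (V_kᵀ Ω)⁺‖_ξ². (Forward error bound for projection-based low-rank approximation.) -/

import Mathlib

open Matrix

/-- Spectral norm (largest singular value) of a real matrix. -/
noncomputable def specNorm {m n : ℕ} (A : Matrix (Fin m) (Fin n) ℝ) : ℝ :=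
  ‖LinearMap.toContinuousLinearMap (Matrix.toEuclideanLin A)‖

/-- Frobenius norm of a real matrix. -/
noncomputable def frobNorm {m n : ℕ} (A : Matrix (Fin m) (Fin n) ℝ) : ℝ :=
  Real.sqrt (∑ i, ∑ j, (A i j) ^ 2)

/-- `P` satisfies the four Penrose conditions for being the Moore–Penrose
pseudoinverse of `A`. -/
def IsMoorePenrose {m n : ℕ} (A : Matrix (Fin m) (Fin n) ℝ)
    (P : Matrix (Fin n) (Fin m) ℝ) : Prop :=
  A * P * A = A ∧ P * A * P = P ∧ (A * P)ᵀ = A * P ∧ (P * A)ᵀ = P * A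

lemma te_mul {m n p : ℕ} (A : Matrix (Fin m) (Fin n) ℝ) (B : Matrix (Fin n) (Fin p) ℝ)
    (v : EuclideanSpace ℝ (Fin p)) :
    Matrix.toEuclideanLin (A * B) v = Matrix.toEuclideanLin A (Matrix.toEuclideanLin B v) := by
  simp [Matrix.toEuclideanLin_apply, Matrix.mulVec_mulVec]

lemma te_inner {m n : ℕ} (A : Matrix (Fin m) (Fin n) ℝ) (x : EuclideanSpace ℝ (Fin n))
    (y : EuclideanSpace ℝ (Fin m)) :
    inner ℝ (Matrix.toEuclideanLin A x) y = (inner ℝ x (Matrix.toEuclideanLin Aᵀ y) : ℝ) := by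
  rw [show Aᵀ = Aᴴ from (Matrix.conjTranspose_eq_transpose_of_trivial A).symm,
    Matrix.toEuclideanLin_conjTranspose_eq_adjoint, LinearMap.adjoint_inner_right]

lemma contract_aux {m n : ℕ} (M : Matrix (Fin m) (Fin n) ℝ)
    (h : (Mᵀ * M) * (Mᵀ * M) = Mᵀ * M) (v : EuclideanSpace ℝ (Fin n)) :
    ‖Matrix.toEuclideanLin M v‖ ≤ ‖v‖ := by
  set N := Mᵀ * M with hN
  have hNs : Nᵀ = N := by simp [hN, Matrix.transpose_mul, Matrix.mul_assoc]
  have h1 : ‖Matrix.toEuclideanLin M v‖ ^ 2 = inner ℝ v (Matrix.toEuclideanLin N v) := by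
    rw [← real_inner_self_eq_norm_sq, te_inner, ← te_mul]
  have h2 : (inner ℝ v (Matrix.toEuclideanLin N v) : ℝ) =
      ‖Matrix.toEuclideanLin N v‖ ^ 2 := by
    conv_lhs => rw [← h, te_mul]
    rw [← real_inner_self_eq_norm_sq]
    rw [real_inner_comm, te_inner, hNs]
  have h3 : ‖Matrix.toEuclideanLin N v‖ ≤ ‖v‖ := by
    rcases eq_or_lt_of_le (norm_nonneg (Matrix.toEuclideanLin N v)) with h0 | h0
    · rw [← h0]; exact norm_nonneg v
    · have := real_inner_le_norm v (Matrix.toEuclideanLin N v)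
      rw [h2] at this
      nlinarith
  have h4 : (inner ℝ v (Matrix.toEuclideanLin N v) : ℝ) ≤ ‖v‖ ^ 2 := by
    calc (inner ℝ v (Matrix.toEuclideanLin N v) : ℝ) ≤ ‖v‖ * ‖Matrix.toEuclideanLin N v‖ :=
          real_inner_le_norm _ _
      _ ≤ ‖v‖ * ‖v‖ := by nlinarith [norm_nonneg v]
      _ = ‖v‖ ^ 2 := (sq ‖v‖).symm
  nlinarith [norm_nonneg (Matrix.toEuclideanLin M v), norm_nonneg v, h1]

lemma spec_apply_le {m n : ℕ} (A : Matrix (Fin m) (Fin n) ℝ) (v : EuclideanSpace ℝ (Fin n)) :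
    ‖Matrix.toEuclideanLin A v‖ ≤ specNorm A * ‖v‖ :=
  (LinearMap.toContinuousLinearMap (Matrix.toEuclideanLin A)).le_opNorm v

lemma specNorm_nonneg {m n : ℕ} (A : Matrix (Fin m) (Fin n) ℝ) : 0 ≤ specNorm A :=
  norm_nonneg _

lemma specNorm_neg {m n : ℕ} (A : Matrix (Fin m) (Fin n) ℝ) : specNorm (-A) = specNorm A := by
  simp [specNorm, map_neg]

lemma frob_sq {m n : ℕ} (A : Matrix (Fin m) (Fin n) ℝ) :
    frobNorm A ^ 2 = Matrix.trace (Aᵀ * A) := by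
  rw [frobNorm, Real.sq_sqrt (by positivity)]
  simp only [Matrix.trace, Matrix.diag, Matrix.mul_apply, Matrix.transpose_apply, sq]
  rw [Finset.sum_comm]

lemma frob_nonneg {m n : ℕ} (A : Matrix (Fin m) (Fin n) ℝ) : 0 ≤ frobNorm A :=
  Real.sqrt_nonneg _

lemma frob_neg {m n : ℕ} (A : Matrix (Fin m) (Fin n) ℝ) : frobNorm (-A) = frobNorm A := by
  simp [frobNorm]

lemma full_row_rank_eq_one {k r : ℕ} (M : Matrix (Fin k) (Fin r) ℝ)
    (B : Matrix (Fin k) (Fin k) ℝ) (hBM : B * M = M) (hr : M.rank = k) : B = 1 := by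
  have hsurj : Function.Surjective M.mulVecLin := by
    rw [← LinearMap.range_eq_top]
    apply Submodule.eq_top_of_finrank_eq
    rw [← Matrix.rank, hr]
    simp
  have h1 : ∀ x, B *ᵥ x = x := by
    intro x
    obtain ⟨y, hy⟩ := hsurj x
    have hy' : M *ᵥ y = x := hy
    calc B *ᵥ x = (B * M) *ᵥ y := by rw [← Matrix.mulVec_mulVec, hy']
      _ = x := by rw [hBM, hy']
  ext i j
  have := congrFun (h1 (Pi.single j 1)) i
  simpa [Matrix.one_apply, Pi.single_apply, eq_comm] using this

/-- Structural residual-error bound for projection-based low-rank approximation: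
given an SVD `A = U_k Σ_k V_kᵀ + U_{ρ−k} Σ_{ρ−k} V_{ρ−k}ᵀ` partitioned at `k`,
`Y = A Ω`, and `V_kᵀ Ω` of full row rank, for both the spectral and Frobenius
norms, `‖A_k − Y Y⁺ A‖² ≤ ‖A − A_k‖² + ‖Σ_{ρ−k} V_{ρ−k}ᵀ Ω (V_kᵀ Ω)⁺‖²`. -/
theorem structural_forward_bound {m n r k ρk : ℕ}
    (A : Matrix (Fin m) (Fin n) ℝ)
    (Uk : Matrix (Fin m) (Fin k) ℝ) (Ur : Matrix (Fin m) (Fin ρk) ℝ)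
    (Vk : Matrix (Fin n) (Fin k) ℝ) (Vr : Matrix (Fin n) (Fin ρk) ℝ)
    (σk : Fin k → ℝ) (σr : Fin ρk → ℝ)
    (hA : A = Uk * Matrix.diagonal σk * Vkᵀ + Ur * Matrix.diagonal σr * Vrᵀ)
    (hUk : Ukᵀ * Uk = 1) (hUr : Urᵀ * Ur = 1) (hUkr : Ukᵀ * Ur = 0)
    (hVk : Vkᵀ * Vk = 1) (hVr : Vrᵀ * Vr = 1) (hVkr : Vkᵀ * Vr = 0)
    (hσk : ∀ i, 0 < σk i) (hσr : ∀ i, 0 < σr i)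
    (hord : ∀ i j, σr j ≤ σk i)
    (hrank : A.rank = k + ρk)
    (Ω : Matrix (Fin n) (Fin r) ℝ) (hkr : k ≤ r)
    (hfull : (Vkᵀ * Ω).rank = k)
    (Py : Matrix (Fin r) (Fin m) ℝ) (hPy : IsMoorePenrose (A * Ω) Py)
    (Q : Matrix (Fin r) (Fin k) ℝ) (hQ : IsMoorePenrose (Vkᵀ * Ω) Q) :
    specNorm (Uk * Matrix.diagonal σk * Vkᵀ - (A * Ω) * Py * A) ^ 2 ≤
      specNorm (A - Uk * Matrix.diagonal σk * Vkᵀ) ^ 2 +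
      specNorm (Matrix.diagonal σr * Vrᵀ * Ω * Q) ^ 2 ∧
    frobNorm (Uk * Matrix.diagonal σk * Vkᵀ - (A * Ω) * Py * A) ^ 2 ≤
      frobNorm (A - Uk * Matrix.diagonal σk * Vkᵀ) ^ 2 +
      frobNorm (Matrix.diagonal σr * Vrᵀ * Ω * Q) ^ 2 := by
  obtain ⟨hp1, hp2, hp3, hp4⟩ := hPy
  obtain ⟨hq1, hq2, hq3, hq4⟩ := hQ
  set Ak : Matrix (Fin m) (Fin n) ℝ := Uk * Matrix.diagonal σk * Vkᵀ with hAkdef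
  set P : Matrix (Fin m) (Fin m) ℝ := A * Ω * Py with hPdef
  set F : Matrix (Fin ρk) (Fin k) ℝ := Matrix.diagonal σr * Vrᵀ * Ω * Q with hFdef
  clear_value Ak P F
  have hPsymm : Pᵀ = P := hp3
  have hPP : P * P = P := by
    nth_rewrite 2 [hPdef]
    rw [← Matrix.mul_assoc, hp1, ← hPdef]
  have hQ1 : (Vkᵀ * Ω) * Q = 1 :=
    full_row_rank_eq_one (Vkᵀ * Ω) ((Vkᵀ * Ω) * Q) (by rw [Matrix.mul_assoc] at hq1 ⊢; exact hq1) hfull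
  have hQ1' : Vkᵀ * (Ω * Q) = 1 := by rw [← Matrix.mul_assoc]; exact hQ1
  have hAΩQ : A * Ω * Q = Uk * Matrix.diagonal σk + Ur * F := by
    have hF' : Ur * F = Ur * (Matrix.diagonal σr * (Vrᵀ * (Ω * Q))) := by
      simp only [hFdef, Matrix.mul_assoc]
    rw [hA, hAkdef, hF']
    simp only [Matrix.add_mul, Matrix.mul_assoc, hQ1', Matrix.mul_one]
  have hPAΩQ : P * (A * Ω * Q) = A * Ω * Q := by
    rw [← Matrix.mul_assoc, hp1]
  have hAkEq : Ak = (A * Ω * Q) * Vkᵀ - Ur * (F * Vkᵀ) := by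
    conv_lhs => rw [hAkdef]
    rw [hAΩQ, Matrix.add_mul]
    simp only [Matrix.mul_assoc]
    abel
  have hPAk : P * Ak = Ak + Ur * (F * Vkᵀ) - P * (Ur * (F * Vkᵀ)) := by
    conv_lhs => rw [hAkEq]
    rw [Matrix.mul_sub, ← Matrix.mul_assoc, hPAΩQ]
    conv_rhs => rw [hAkEq]
    abel
  set X : Matrix (Fin m) (Fin n) ℝ := ((1 : Matrix (Fin m) (Fin m) ℝ) - P) * (Ur * (F * Vkᵀ))
    with hXdef
  set Y : Matrix (Fin m) (Fin n) ℝ := P * (A - Ak) with hYdef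
  clear_value X Y
  have h1Pt : ((1 : Matrix (Fin m) (Fin m) ℝ) - P)ᵀ = 1 - P := by
    rw [Matrix.transpose_sub, Matrix.transpose_one, hPsymm]
  have h1PP : ((1 : Matrix (Fin m) (Fin m) ℝ) - P) * (1 - P) = 1 - P := by
    simp only [Matrix.mul_sub, Matrix.sub_mul, Matrix.one_mul, Matrix.mul_one, hPP]
    abel
  have h1P : ((1 : Matrix (Fin m) (Fin m) ℝ) - P)ᵀ * (1 - P) = 1 - P := by
    rw [h1Pt, h1PP]
  have hXtY : Xᵀ * Y = 0 := by
    have h0 : ((1 : Matrix (Fin m) (Fin m) ℝ) - P)ᵀ * P = 0 := by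
      rw [h1Pt, Matrix.sub_mul, Matrix.one_mul, hPP, sub_self]
    have : Xᵀ * Y = (Ur * (F * Vkᵀ))ᵀ * ((((1 : Matrix (Fin m) (Fin m) ℝ) - P)ᵀ * P) * (A - Ak)) := by
      simp only [hXdef, hYdef, Matrix.transpose_mul, Matrix.mul_assoc]
    rw [this, h0, Matrix.zero_mul, Matrix.mul_zero]
  have hL : Ak - P * A = -(X + Y) := by
    simp only [hXdef, hYdef, Matrix.sub_mul, Matrix.mul_sub, Matrix.one_mul]
    rw [hPAk]
    abel
  have hPcon : ∀ v : EuclideanSpace ℝ (Fin m), ‖Matrix.toEuclideanLin P v‖ ≤ ‖v‖ := by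
    intro v
    apply contract_aux
    rw [hPsymm, hPP, hPP]
  have h1Pcon : ∀ v : EuclideanSpace ℝ (Fin m),
      ‖Matrix.toEuclideanLin ((1 : Matrix (Fin m) (Fin m) ℝ) - P) v‖ ≤ ‖v‖ := by
    intro v
    apply contract_aux
    rw [h1P, h1PP]
  have hUrcon : ∀ v : EuclideanSpace ℝ (Fin ρk), ‖Matrix.toEuclideanLin Ur v‖ = ‖v‖ := by
    intro v
    have h1 : ‖Matrix.toEuclideanLin Ur v‖ ^ 2 = ‖v‖ ^ 2 := by
      rw [← real_inner_self_eq_norm_sq, te_inner, ← te_mul, hUr, ← real_inner_self_eq_norm_sq]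
      simp [Matrix.toEuclideanLin_apply]
    rw [← Real.sqrt_sq (norm_nonneg (Matrix.toEuclideanLin Ur v)),
      ← Real.sqrt_sq (norm_nonneg v), h1]
  have hVkcon : ∀ v : EuclideanSpace ℝ (Fin n), ‖Matrix.toEuclideanLin Vkᵀ v‖ ≤ ‖v‖ := by
    intro v
    apply contract_aux
    have : Vkᵀᵀ * Vkᵀ = Vk * Vkᵀ := by rw [Matrix.transpose_transpose]
    rw [this]
    calc Vk * Vkᵀ * (Vk * Vkᵀ) = Vk * ((Vkᵀ * Vk) * Vkᵀ) := by simp only [Matrix.mul_assoc]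
      _ = Vk * Vkᵀ := by rw [hVk, Matrix.one_mul]
  -- spectral bound
  have sF := specNorm_nonneg F
  have sA := specNorm_nonneg (A - Ak)
  have key : ∀ v : EuclideanSpace ℝ (Fin n),
      ‖Matrix.toEuclideanLin (X + Y) v‖ ^ 2 ≤
        (specNorm (A - Ak) ^ 2 + specNorm F ^ 2) * ‖v‖ ^ 2 := by
    intro v
    have hXv : ‖Matrix.toEuclideanLin X v‖ ≤ specNorm F * ‖v‖ := by
      rw [hXdef, te_mul, te_mul, te_mul]
      calc ‖Matrix.toEuclideanLin ((1:Matrix (Fin m) (Fin m) ℝ) - P)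
              (Matrix.toEuclideanLin Ur (Matrix.toEuclideanLin F (Matrix.toEuclideanLin Vkᵀ v)))‖
          ≤ ‖Matrix.toEuclideanLin Ur (Matrix.toEuclideanLin F (Matrix.toEuclideanLin Vkᵀ v))‖ :=
            h1Pcon _
        _ = ‖Matrix.toEuclideanLin F (Matrix.toEuclideanLin Vkᵀ v)‖ := hUrcon _
        _ ≤ specNorm F * ‖Matrix.toEuclideanLin Vkᵀ v‖ := spec_apply_le _ _
        _ ≤ specNorm F * ‖v‖ := by
            exact mul_le_mul_of_nonneg_left (hVkcon v) sF
    have hYv : ‖Matrix.toEuclideanLin Y v‖ ≤ specNorm (A - Ak) * ‖v‖ := by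
      rw [hYdef, te_mul]
      calc ‖Matrix.toEuclideanLin P (Matrix.toEuclideanLin (A - Ak) v)‖
          ≤ ‖Matrix.toEuclideanLin (A - Ak) v‖ := hPcon _
        _ ≤ specNorm (A - Ak) * ‖v‖ := spec_apply_le _ _
    have hortho : (inner ℝ (Matrix.toEuclideanLin X v) (Matrix.toEuclideanLin Y v) : ℝ) = 0 := by
      rw [te_inner, ← te_mul, hXtY]
      simp [Matrix.toEuclideanLin_apply]
    have hsplit : ‖Matrix.toEuclideanLin (X + Y) v‖ ^ 2 =
        ‖Matrix.toEuclideanLin X v‖ ^ 2 + ‖Matrix.toEuclideanLin Y v‖ ^ 2 := by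
      have : Matrix.toEuclideanLin (X + Y) v =
          Matrix.toEuclideanLin X v + Matrix.toEuclideanLin Y v := by
        rw [map_add]; rfl
      rw [this, norm_add_sq_real, hortho]
      ring
    rw [hsplit]
    have e1 : ‖Matrix.toEuclideanLin X v‖ ^ 2 ≤ (specNorm F * ‖v‖) ^ 2 :=
      pow_le_pow_left₀ (norm_nonneg _) hXv 2
    have e2 : ‖Matrix.toEuclideanLin Y v‖ ^ 2 ≤ (specNorm (A - Ak) * ‖v‖) ^ 2 :=
      pow_le_pow_left₀ (norm_nonneg _) hYv 2
    have e3 : (specNorm (A - Ak) * ‖v‖) ^ 2 + (specNorm F * ‖v‖) ^ 2 =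
        (specNorm (A - Ak) ^ 2 + specNorm F ^ 2) * ‖v‖ ^ 2 := by ring
    linarith
  have sspec : specNorm (X + Y) ^ 2 ≤ specNorm (A - Ak) ^ 2 + specNorm F ^ 2 := by
    set S : ℝ := specNorm (A - Ak) ^ 2 + specNorm F ^ 2 with hS
    have hSnn : 0 ≤ S := by positivity
    have hb : specNorm (X + Y) ≤ Real.sqrt S := by
      apply ContinuousLinearMap.opNorm_le_bound _ (Real.sqrt_nonneg S)
      intro v
      have hk := key v
      have : ‖Matrix.toEuclideanLin (X + Y) v‖ ^ 2 ≤ (Real.sqrt S * ‖v‖) ^ 2 := by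
        rw [mul_pow, Real.sq_sqrt hSnn]; exact hk
      have hnn : (0:ℝ) ≤ Real.sqrt S * ‖v‖ := by positivity
      calc ‖Matrix.toEuclideanLin (X + Y) v‖
          = Real.sqrt (‖Matrix.toEuclideanLin (X + Y) v‖ ^ 2) :=
            (Real.sqrt_sq (norm_nonneg _)).symm
        _ ≤ Real.sqrt ((Real.sqrt S * ‖v‖) ^ 2) := Real.sqrt_le_sqrt this
        _ = Real.sqrt S * ‖v‖ := Real.sqrt_sq hnn
    have := pow_le_pow_left₀ (specNorm_nonneg (X + Y)) hb 2
    rwa [Real.sq_sqrt hSnn] at this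
  -- Frobenius bound
  have tXY : Matrix.trace ((X + Y)ᵀ * (X + Y)) = Matrix.trace (Xᵀ * X) + Matrix.trace (Yᵀ * Y) := by
    have hYtX : Yᵀ * X = 0 := by
      have := congrArg Matrix.transpose hXtY
      rwa [Matrix.transpose_mul, Matrix.transpose_transpose, Matrix.transpose_zero] at this
    rw [Matrix.transpose_add, Matrix.add_mul, Matrix.mul_add, Matrix.mul_add, hXtY, hYtX]
    simp [Matrix.trace_add]
  have hYfr : frobNorm Y ^ 2 ≤ frobNorm (A - Ak) ^ 2 := by
    have hY2 : frobNorm Y ^ 2 = Matrix.trace ((A - Ak)ᵀ * (P * (A - Ak))) := by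
      rw [frob_sq]
      congr 1
      calc Yᵀ * Y = (A - Ak)ᵀ * ((Pᵀ * P) * (A - Ak)) := by
            simp only [hYdef, Matrix.transpose_mul, Matrix.mul_assoc]
        _ = (A - Ak)ᵀ * (P * (A - Ak)) := by rw [hPsymm, hPP]
    have hZ2 : frobNorm (((1:Matrix (Fin m) (Fin m) ℝ) - P) * (A - Ak)) ^ 2 =
        Matrix.trace ((A - Ak)ᵀ * ((1 - P) * (A - Ak))) := by
      rw [frob_sq]
      congr 1
      calc (((1:Matrix (Fin m) (Fin m) ℝ) - P) * (A - Ak))ᵀ * (((1 - P)) * (A - Ak))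
          = (A - Ak)ᵀ * (((1 - P)ᵀ * (1 - P)) * (A - Ak)) := by
            simp only [Matrix.transpose_mul, Matrix.mul_assoc]
        _ = (A - Ak)ᵀ * ((1 - P) * (A - Ak)) := by rw [h1P]
    have hsum : frobNorm (A - Ak) ^ 2 =
        frobNorm Y ^ 2 + frobNorm (((1:Matrix (Fin m) (Fin m) ℝ) - P) * (A - Ak)) ^ 2 := by
      rw [frob_sq, hY2, hZ2, ← Matrix.trace_add, ← Matrix.mul_add, ← Matrix.add_mul,
        show P + ((1:Matrix (Fin m) (Fin m) ℝ) - P) = 1 by abel, Matrix.one_mul]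
    linarith [sq_nonneg (frobNorm (((1:Matrix (Fin m) (Fin m) ℝ) - P) * (A - Ak)))]
  have hXfr : frobNorm X ^ 2 ≤ frobNorm F ^ 2 := by
    set W : Matrix (Fin m) (Fin n) ℝ := Ur * (F * Vkᵀ) with hWdef
    clear_value W
    have hX2 : frobNorm X ^ 2 = Matrix.trace (Wᵀ * ((1 - P) * W)) := by
      rw [frob_sq]
      congr 1
      calc Xᵀ * X = Wᵀ * ((((1:Matrix (Fin m) (Fin m) ℝ) - P)ᵀ * (1 - P)) * W) := by
            simp only [hXdef, hWdef, Matrix.transpose_mul, Matrix.mul_assoc]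
        _ = Wᵀ * ((1 - P) * W) := by rw [h1P]
    have hPW2 : frobNorm (P * W) ^ 2 = Matrix.trace (Wᵀ * (P * W)) := by
      rw [frob_sq]
      congr 1
      calc (P * W)ᵀ * (P * W) = Wᵀ * ((Pᵀ * P) * W) := by
            simp only [Matrix.transpose_mul, Matrix.mul_assoc]
        _ = Wᵀ * (P * W) := by rw [hPsymm, hPP]
    have hWsum : frobNorm W ^ 2 = frobNorm X ^ 2 + frobNorm (P * W) ^ 2 := by
      rw [frob_sq, hX2, hPW2, ← Matrix.trace_add, ← Matrix.mul_add, ← Matrix.add_mul,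
        show ((1:Matrix (Fin m) (Fin m) ℝ) - P) + P = 1 by abel, Matrix.one_mul]
    have hWF : frobNorm W ^ 2 = frobNorm F ^ 2 := by
      rw [frob_sq, frob_sq]
      calc Matrix.trace (Wᵀ * W)
          = Matrix.trace ((F * Vkᵀ)ᵀ * ((Urᵀ * Ur) * (F * Vkᵀ))) := by
            simp only [hWdef, Matrix.transpose_mul, Matrix.mul_assoc]
        _ = Matrix.trace ((Vk * Fᵀ) * (F * Vkᵀ)) := by
            rw [hUr, Matrix.one_mul, Matrix.transpose_mul, Matrix.transpose_transpose]
        _ = Matrix.trace ((F * Vkᵀ) * (Vk * Fᵀ)) := Matrix.trace_mul_comm _ _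
        _ = Matrix.trace (F * Fᵀ) := by
            rw [Matrix.mul_assoc, ← Matrix.mul_assoc Vkᵀ, hVk, Matrix.one_mul]
        _ = Matrix.trace (Fᵀ * F) := Matrix.trace_mul_comm _ _
    linarith [sq_nonneg (frobNorm (P * W))]
  have hfrob : frobNorm (X + Y) ^ 2 ≤ frobNorm (A - Ak) ^ 2 + frobNorm F ^ 2 := by
    have : frobNorm (X + Y) ^ 2 = frobNorm X ^ 2 + frobNorm Y ^ 2 := by
      rw [frob_sq, tXY, ← frob_sq, ← frob_sq]
    linarith
  rw [hL, show -(X + Y) = -(X + Y) from rfl]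
  constructor
  · rw [specNorm_neg]; exact sspec
  · rw [frob_neg]; exact hfrob
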